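/- Let d ≥ 1, C ≥ 2, σ > 0, and define G(W) = E_M[ M (diag(1/C,…,1/C) − (1/C²)𝟙𝟙ᵀ) Mᵀ ] · (σ²W − I_d) for W ∈ ℝ^{d×d}, where M ∈ ℝ^{d×C} has i.i.d. N(0,1) entries and 𝟙 ∈ ℝ^C is the all-ones vector. Then for every W ∈ ℝ^{d×d}: (i) the Frobenius inner product satisfies ⟨W − σ⁻²I_d, G(W)⟩_F = σ²(1 − 1/C)·‖W − σ⁻²I_d‖_F², and (ii) ‖G(W)‖_F = σ²(1 − 1/C)·‖W − σ⁻²I_d‖_F. -/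

import Mathlib

/-!
Statement 11: alignment and norm identities for the population gradient map
G(W) = E_M[M(diag(1/C) − (1/C²)𝟙𝟙ᵀ)Mᵀ]·(σ²W − I):
⟨W − σ⁻²I, G(W)⟩_F = σ²(1 − 1/C)‖W − σ⁻²I‖_F² and
‖G(W)‖_F = σ²(1 − 1/C)‖W − σ⁻²I‖_F.
-/

open MeasureTheory ProbabilityTheory Finset

noncomputable section

/-- law of a d×C matrix with i.i.d. standard Gaussian entries. -/
def stdMatGauss (d C : ℕ) : Measure (Fin d → Fin C → ℝ) :=
  Measure.pi fun _ : Fin d => Measure.pi fun _ : Fin C => gaussianReal 0 1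

/-- the C×C matrix diag(1/C,…,1/C) − (1/C²)𝟙𝟙ᵀ. -/
def Amat (C : ℕ) : Matrix (Fin C) (Fin C) ℝ :=
  ((1 : ℝ) / C) • (1 : Matrix (Fin C) (Fin C) ℝ) -
    ((1 : ℝ) / (C : ℝ) ^ 2) • Matrix.of (fun _ _ => (1 : ℝ))

/-- entrywise expectation E_M[M(diag(1/C) − (1/C²)𝟙𝟙ᵀ)Mᵀ]. -/
def EMAMt (d C : ℕ) : Matrix (Fin d) (Fin d) ℝ :=
  Matrix.of fun a b =>
    ∫ m : Fin d → Fin C → ℝ,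
      (Matrix.of m * Amat C * (Matrix.of m).transpose) a b ∂(stdMatGauss d C)

/-- the population gradient map G(W). -/
def Gmap (d C : ℕ) (σ : ℝ) (W : Matrix (Fin d) (Fin d) ℝ) : Matrix (Fin d) (Fin d) ℝ :=
  EMAMt d C * (σ ^ 2 • W - 1)

/-- Frobenius inner product. -/
def frobInner {d : ℕ} (A B : Matrix (Fin d) (Fin d) ℝ) : ℝ :=
  ∑ a : Fin d, ∑ b : Fin d, A a b * B a b

/-- Frobenius norm. -/
def frobNorm {d : ℕ} (A : Matrix (Fin d) (Fin d) ℝ) : ℝ :=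
  Real.sqrt (frobInner A A)

/-! ### Auxiliary material -/

open Real

lemma aux_rpow_two_eq (x : ℝ) : x ^ (2:ℝ) = x ^ (2:ℕ) := by
  rw [show (2:ℝ) = ((2:ℕ):ℝ) by norm_num, Real.rpow_natCast]

lemma aux_gauss_pdf_eq (x : ℝ) :
    gaussianPDFReal 0 1 x = (Real.sqrt (2 * π))⁻¹ * Real.exp (-(1/2) * x ^ 2) := by
  simp only [gaussianPDFReal, NNReal.coe_one, mul_one, sub_zero]
  rw [neg_div]
  ring_nf

lemma aux_int_gauss_pdf_mul (f : ℝ → ℝ) :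
    ∫ x, f x ∂(gaussianReal 0 1) = ∫ x, f x * gaussianPDFReal 0 1 x := by
  rw [gaussianReal_of_var_ne_zero 0 one_ne_zero, gaussianPDF_def]
  rw [show (fun x => ENNReal.ofReal (gaussianPDFReal 0 1 x))
      = (fun x => ((gaussianPDFReal 0 1 x).toNNReal : ENNReal)) from rfl,
    integral_withDensity_eq_integral_smul ((measurable_gaussianPDFReal 0 1).real_toNNReal)]
  congr 1; ext x
  simp [NNReal.smul_def, Real.coe_toNNReal _ (gaussianPDFReal_nonneg 0 1 x), mul_comm]

lemma aux_key_int : ∫ x : ℝ, x ^ 2 * Real.exp (-(1/2) * x ^ 2) = Real.sqrt (2 * π) := by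
  have h := integral_comp_abs (f := fun t => t ^ 2 * Real.exp (-(1/2) * t ^ 2))
  simp only [sq_abs] at h
  rw [h]
  have h2 : ∫ x in Set.Ioi (0:ℝ), x ^ (2:ℕ) * Real.exp (-(1/2) * x ^ (2:ℕ))
      = ∫ x in Set.Ioi (0:ℝ), x ^ (2:ℝ) * Real.exp (-(1/2) * x ^ (2:ℝ)) := by
    simp_rw [aux_rpow_two_eq]
  rw [h2, integral_rpow_mul_exp_neg_mul_rpow (by norm_num) (by norm_num) (by norm_num)]
  have h3 : ((2:ℝ) + 1) / 2 = 1/2 + 1 := by norm_num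
  rw [h3, Real.Gamma_add_one (by norm_num), Real.Gamma_one_half_eq]
  have h4 : ((1:ℝ)/2) ^ (-(2 + 1) / 2 : ℝ) = 2 * Real.sqrt 2 := by
    rw [show ((1:ℝ)/2) = 2⁻¹ by norm_num,
      Real.inv_rpow (by norm_num : (0:ℝ) ≤ 2),
      show (-(2 + 1) / 2 : ℝ) = -(3/2) by norm_num,
      Real.rpow_neg (by norm_num : (0:ℝ) ≤ 2), inv_inv,
      show (3/2 : ℝ) = 1 + 1/2 by norm_num,
      Real.rpow_add (by norm_num : (0:ℝ) < 2), Real.rpow_one,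
      ← Real.sqrt_eq_rpow]
  rw [h4, Real.sqrt_mul (by norm_num : (0:ℝ) ≤ 2)]
  ring

lemma aux_gauss_mean : ∫ x, x ∂(gaussianReal 0 1) = 0 := by
  rw [aux_int_gauss_pdf_mul]
  have h2 := MeasureTheory.integral_neg_eq_self (fun x => x * gaussianPDFReal 0 1 x) volume
  have he : ∀ x : ℝ, gaussianPDFReal 0 1 (-x) = gaussianPDFReal 0 1 x := by
    intro x; simp [gaussianPDFReal]
  simp_rw [he, neg_mul, integral_neg] at h2
  linarith

lemma aux_gauss_sq : ∫ x, x ^ 2 ∂(gaussianReal 0 1) = 1 := by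
  rw [aux_int_gauss_pdf_mul]
  simp_rw [aux_gauss_pdf_eq, show ∀ x : ℝ, x ^ 2 * ((Real.sqrt (2*π))⁻¹ * Real.exp (-(1/2) * x ^ 2))
    = (Real.sqrt (2*π))⁻¹ * (x ^ 2 * Real.exp (-(1/2) * x ^ 2)) from fun x => by ring]
  rw [integral_const_mul, aux_key_int, inv_mul_cancel₀]
  positivity

lemma aux_integrable_gauss_id : Integrable (fun x : ℝ => x) (gaussianReal 0 1) := by
  rw [gaussianReal_of_var_ne_zero 0 one_ne_zero, gaussianPDF_def,
    integrable_withDensity_iff ((measurable_gaussianPDFReal 0 1).ennreal_ofReal)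
      (ae_of_all _ fun x => ENNReal.ofReal_lt_top)]
  simp_rw [ENNReal.toReal_ofReal (gaussianPDFReal_nonneg 0 1 _), aux_gauss_pdf_eq,
    show ∀ x : ℝ, x * ((Real.sqrt (2*π))⁻¹ * Real.exp (-(1/2) * x ^ 2))
      = (Real.sqrt (2*π))⁻¹ * (x * Real.exp (-(1/2) * x ^ 2)) from fun x => by ring]
  refine Integrable.const_mul ?_ _
  have := integrable_rpow_mul_exp_neg_mul_sq (by norm_num : (0:ℝ) < 1/2) (by norm_num : (-1:ℝ) < 1)
  simpa [Real.rpow_one] using this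

lemma aux_integrable_gauss_sq : Integrable (fun x : ℝ => x ^ 2) (gaussianReal 0 1) := by
  rw [gaussianReal_of_var_ne_zero 0 one_ne_zero, gaussianPDF_def,
    integrable_withDensity_iff ((measurable_gaussianPDFReal 0 1).ennreal_ofReal)
      (ae_of_all _ fun x => ENNReal.ofReal_lt_top)]
  simp_rw [ENNReal.toReal_ofReal (gaussianPDFReal_nonneg 0 1 _), aux_gauss_pdf_eq,
    show ∀ x : ℝ, x ^ 2 * ((Real.sqrt (2*π))⁻¹ * Real.exp (-(1/2) * x ^ 2))
      = (Real.sqrt (2*π))⁻¹ * (x ^ 2 * Real.exp (-(1/2) * x ^ 2)) from fun x => by ring]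
  refine Integrable.const_mul ?_ _
  have := integrable_rpow_mul_exp_neg_mul_sq (by norm_num : (0:ℝ) < 1/2) (by norm_num : (-1:ℝ) < 2)
  simpa [aux_rpow_two_eq] using this

/-- type synonym for `ℝ` carrying the standard Gaussian as volume. -/
def GR : Type := ℝ
instance : MeasurableSpace GR := (inferInstance : MeasurableSpace ℝ)
instance : MeasureSpace GR := ⟨gaussianReal 0 1⟩
instance : IsProbabilityMeasure (volume : Measure GR) :=
  (inferInstance : IsProbabilityMeasure (gaussianReal 0 1))

lemma aux_gr_eval (p q : Prop) [Decidable p] [Decidable q] :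
    ∫ t : GR, ((fun x : ℝ => (if p then x else 1) * (if q then x else 1)) t)
      = if p then (if q then 1 else 0) else (if q then 0 else 1) := by
  by_cases hp : p <;> by_cases hq : q <;> simp only [hp, hq, if_true, if_false]
  · simp_rw [← sq]; exact aux_gauss_sq
  · show ∫ t : ℝ, t * 1 ∂(gaussianReal 0 1) = 0
    simp only [mul_one]; exact aux_gauss_mean
  · show ∫ t : ℝ, 1 * t ∂(gaussianReal 0 1) = 0
    simp only [one_mul]; exact aux_gauss_mean
  · simp

lemma aux_gr_integrable (p q : Prop) [Decidable p] [Decidable q] :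
    Integrable (fun x : ℝ => (if p then x else 1) * (if q then x else 1))
      (volume : Measure GR) := by
  by_cases hp : p <;> by_cases hq : q <;> simp only [hp, hq, if_true, if_false]
  · simp_rw [← sq]; exact aux_integrable_gauss_sq
  · simp only [mul_one]; exact aux_integrable_gauss_id
  · simp only [one_mul]; exact aux_integrable_gauss_id
  · simp only [mul_one]; exact integrable_const (μ := (volume : Measure GR)) (1:ℝ)

lemma aux_prod_if_mul {ι M : Type*} [Fintype ι] [DecidableEq ι] [CommMonoid M]
    (a b : ι) (x y : ι → M) :
    ∏ k, ((if k = a then x k else 1) * (if k = b then y k else 1)) = x a * y b := by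
  rw [Finset.prod_mul_distrib, Finset.prod_ite_eq', Finset.prod_ite_eq']
  simp

lemma aux_prod_if_mul' {ι M : Type*} [Fintype ι] [DecidableEq ι] [CommMonoid M]
    (p q : Prop) [Decidable p] [Decidable q] (a b : ι) (x y : ι → M) :
    ∏ k, ((if p ∧ k = a then x k else 1) * (if q ∧ k = b then y k else 1))
      = (if p then x a else 1) * (if q then y b else 1) := by
  rw [Finset.prod_mul_distrib]
  congr 1
  · by_cases hp : p
    · simp only [hp, true_and]; rw [Finset.prod_ite_eq']; simp
    · simp only [hp, false_and, if_false, Finset.prod_const_one]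
  · by_cases hq : q
    · simp only [hq, true_and]; rw [Finset.prod_ite_eq']; simp
    · simp only [hq, false_and, if_false, Finset.prod_const_one]

lemma aux_entry_int (d C : ℕ) (a b : Fin d) (i j : Fin C) :
    ∫ m : Fin d → Fin C → ℝ, m a i * m b j ∂(stdMatGauss d C)
      = if a = b ∧ i = j then 1 else 0 := by
  have hpt : (fun m : Fin d → Fin C → ℝ => m a i * m b j)
      = fun m : Fin d → Fin C → ℝ => ∏ a', ((fun r : Fin C → ℝ =>
          (if a' = a then r i else 1) * (if a' = b then r j else 1)) (m a')) := by
    funext m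
    exact (aux_prod_if_mul a b (fun a' => m a' i) (fun a' => m a' j)).symm
  have hpt2 : ∀ a' : Fin d, (fun r : Fin C → ℝ =>
        (if a' = a then r i else 1) * (if a' = b then r j else 1))
      = fun r : Fin C → ℝ => ∏ k, ((fun x : ℝ =>
          (if a' = a ∧ k = i then x else 1) * (if a' = b ∧ k = j then x else 1)) (r k)) := by
    intro a'
    funext r
    exact (aux_prod_if_mul' (a' = a) (a' = b) i j (fun k => r k) (fun k => r k)).symm
  calc ∫ m : Fin d → Fin C → ℝ, m a i * m b j ∂(stdMatGauss d C)
      = ∫ m : Fin d → Fin C → GR, ∏ a', ((fun r : Fin C → ℝ =>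
          (if a' = a then r i else 1) * (if a' = b then r j else 1)) (m a')) := by
        exact congrArg (MeasureTheory.integral (stdMatGauss d C)) hpt
    _ = ∏ a' : Fin d, ∫ r : Fin C → GR, ((fun r : Fin C → ℝ =>
          (if a' = a then r i else 1) * (if a' = b then r j else 1)) r) :=
        MeasureTheory.integral_fintype_prod_eq_prod (𝕜 := ℝ) (ι := Fin d)
          (E := fun _ : Fin d => (Fin C → GR)) (μ := fun _ => (volume : Measure (Fin C → GR)))
          (fun a' (r : Fin C → ℝ) => (if a' = a then r i else 1) * (if a' = b then r j else 1))
    _ = ∏ a' : Fin d, ∏ k : Fin C, ∫ t : GR, ((fun x : ℝ =>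
          (if a' = a ∧ k = i then x else 1) * (if a' = b ∧ k = j then x else 1)) t) :=
        Finset.prod_congr rfl (fun a' _ => by
          rw [hpt2 a']
          exact MeasureTheory.integral_fintype_prod_eq_prod (𝕜 := ℝ) (ι := Fin C)
            (E := fun _ : Fin C => GR) (μ := fun _ => (volume : Measure GR))
            (fun k (x : ℝ) =>
              (if a' = a ∧ k = i then x else 1) * (if a' = b ∧ k = j then x else 1)))
    _ = ∏ a' : Fin d, ∏ k : Fin C,
          (if a' = a ∧ k = i then (if a' = b ∧ k = j then (1:ℝ) else 0)
            else (if a' = b ∧ k = j then 0 else 1)) :=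
        Finset.prod_congr rfl fun a' _ => Finset.prod_congr rfl fun k _ => aux_gr_eval _ _
    _ = if a = b ∧ i = j then 1 else 0 := by
        by_cases hab : a = b <;> by_cases hij : i = j
        · subst hab; subst hij
          simp only [and_self, if_true]
          refine Finset.prod_eq_one fun a' _ => Finset.prod_eq_one fun k _ => ?_
          by_cases h1 : a' = a <;> by_cases h2 : k = i <;> simp [h1, h2]
        · simp only [hab, hij, and_false, if_false]
          exact Finset.prod_eq_zero (Finset.mem_univ a)
            (Finset.prod_eq_zero (Finset.mem_univ i) (by simp [hab, hij]))
        · simp only [hab, hij, false_and, and_false, if_false]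
          exact Finset.prod_eq_zero (Finset.mem_univ a)
            (Finset.prod_eq_zero (Finset.mem_univ i) (by simp [hab, hij]))
        · simp only [hab, hij, false_and, if_false]
          exact Finset.prod_eq_zero (Finset.mem_univ a)
            (Finset.prod_eq_zero (Finset.mem_univ i) (by simp [hab, hij]))

lemma aux_integrable_entry (d C : ℕ) (a b : Fin d) (i j : Fin C) :
    Integrable (fun m : Fin d → Fin C → ℝ => m a i * m b j) (stdMatGauss d C) := by
  have hpt : (fun m : Fin d → Fin C → ℝ => m a i * m b j)
      = fun m : Fin d → Fin C → ℝ => ∏ a', ((fun r : Fin C → ℝ =>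
          (if a' = a then r i else 1) * (if a' = b then r j else 1)) (m a')) := by
    funext m
    exact (aux_prod_if_mul a b (fun a' => m a' i) (fun a' => m a' j)).symm
  rw [hpt]
  have h : ∀ a' : Fin d, Integrable ((fun r : Fin C → ℝ =>
      (if a' = a then r i else 1) * (if a' = b then r j else 1)))
      (volume : Measure (Fin C → GR)) := by
    intro a'
    have hpt2 : (fun r : Fin C → ℝ =>
          (if a' = a then r i else 1) * (if a' = b then r j else 1))
        = fun r : Fin C → ℝ => ∏ k, ((fun x : ℝ =>
            (if a' = a ∧ k = i then x else 1) * (if a' = b ∧ k = j then x else 1)) (r k)) := by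
      funext r
      exact (aux_prod_if_mul' (a' = a) (a' = b) i j (fun k => r k) (fun k => r k)).symm
    rw [hpt2]
    exact MeasureTheory.Integrable.fintype_prod_dep (𝕜 := ℝ) (E := fun _ : Fin C => GR)
      (f := fun k (x : ℝ) =>
        (if a' = a ∧ k = i then x else 1) * (if a' = b ∧ k = j then x else 1))
      (fun k => aux_gr_integrable _ _)
  exact MeasureTheory.Integrable.fintype_prod_dep (𝕜 := ℝ)
    (E := fun _ : Fin d => (Fin C → GR)) (μ := fun _ => (volume : Measure (Fin C → GR)))
    (f := fun a' (r : Fin C → ℝ) =>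
      (if a' = a then r i else 1) * (if a' = b then r j else 1)) h

lemma aux_EMAMt_eq (d C : ℕ) (hC : (C:ℝ) ≠ 0) :
    EMAMt d C = (1 - 1/(C:ℝ)) • (1 : Matrix (Fin d) (Fin d) ℝ) := by
  ext a b
  show (∫ m : Fin d → Fin C → ℝ,
      (Matrix.of m * Amat C * (Matrix.of m).transpose) a b ∂(stdMatGauss d C)) = _
  have hexp : ∀ m : Fin d → Fin C → ℝ,
      (Matrix.of m * Amat C * (Matrix.of m).transpose) a b
      = ∑ k : Fin C, ∑ l : Fin C, Amat C l k * (m a l * m b k) := by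
    intro m
    simp only [Matrix.mul_apply, Matrix.transpose_apply, Matrix.of_apply]
    refine Finset.sum_congr rfl fun k _ => ?_
    rw [Finset.sum_mul]
    refine Finset.sum_congr rfl fun l _ => by ring
  simp_rw [hexp]
  rw [integral_finset_sum _ (fun k _ => integrable_finset_sum _
    (fun l _ => (aux_integrable_entry d C a b l k).const_mul _))]
  have hk : ∀ k : Fin C,
      (∫ m : Fin d → Fin C → ℝ, ∑ l : Fin C, Amat C l k * (m a l * m b k)
        ∂(stdMatGauss d C))
      = ∑ l : Fin C, Amat C l k * (if a = b ∧ l = k then 1 else 0) := by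
    intro k
    rw [integral_finset_sum _ (fun l _ => (aux_integrable_entry d C a b l k).const_mul _)]
    refine Finset.sum_congr rfl fun l _ => ?_
    rw [MeasureTheory.integral_const_mul, aux_entry_int]
  simp_rw [hk]
  by_cases hab : a = b
  · subst hab
    simp only [true_and, mul_ite, mul_one, mul_zero, Finset.sum_ite_eq',
      Finset.mem_univ, if_true]
    have hAkk : ∀ k : Fin C, Amat C k k = 1/(C:ℝ) - 1/(C:ℝ)^2 := by
      intro k
      simp [Amat, Matrix.one_apply]
    simp_rw [hAkk]
    rw [Finset.sum_const, Finset.card_univ, Fintype.card_fin]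
    simp only [Matrix.smul_apply, Matrix.one_apply_eq, smul_eq_mul, mul_one, nsmul_eq_mul]
    field_simp
  · simp only [hab, false_and, if_false, mul_zero, Finset.sum_const_zero,
      Matrix.smul_apply, Matrix.one_apply_ne hab, smul_eq_mul, mul_zero]

/-- alignment and norm identities for G. -/
theorem population_gradient_alignment
    (d C : ℕ) (hd : 1 ≤ d) (hC : 2 ≤ C) (σ : ℝ) (hσ : 0 < σ)
    (W : Matrix (Fin d) (Fin d) ℝ) :
    frobInner (W - (σ ^ 2)⁻¹ • (1 : Matrix (Fin d) (Fin d) ℝ)) (Gmap d C σ W) =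
        σ ^ 2 * (1 - 1 / (C : ℝ)) *
          frobNorm (W - (σ ^ 2)⁻¹ • (1 : Matrix (Fin d) (Fin d) ℝ)) ^ 2 ∧
    frobNorm (Gmap d C σ W) =
        σ ^ 2 * (1 - 1 / (C : ℝ)) *
          frobNorm (W - (σ ^ 2)⁻¹ • (1 : Matrix (Fin d) (Fin d) ℝ)) := by
  have hCne : (C:ℝ) ≠ 0 := by
    have : (2:ℝ) ≤ (C:ℝ) := by exact_mod_cast hC
    linarith
  have hσ2 : (σ:ℝ) ^ 2 ≠ 0 := by positivity
  set X := W - (σ ^ 2)⁻¹ • (1 : Matrix (Fin d) (Fin d) ℝ) with hX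
  set c := σ ^ 2 * (1 - 1 / (C : ℝ)) with hc
  have hc0 : 0 ≤ c := by
    have h1 : 1/(C:ℝ) ≤ 1 := by
      rw [div_le_one (by positivity : (0:ℝ) < (C:ℝ))]
      have : (2:ℝ) ≤ (C:ℝ) := by exact_mod_cast hC
      linarith
    have : 0 ≤ 1 - 1/(C:ℝ) := by linarith
    positivity
  have hG : Gmap d C σ W = c • X := by
    rw [Gmap, aux_EMAMt_eq d C hCne, Matrix.smul_mul, Matrix.one_mul]
    have hsw : (σ ^ 2 • W - 1 : Matrix (Fin d) (Fin d) ℝ) = σ ^ 2 • X := by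
      rw [hX, smul_sub, smul_smul, mul_inv_cancel₀ hσ2, one_smul]
    rw [hsw, smul_smul, hc, mul_comm (σ ^ 2)]
  have hXX : 0 ≤ frobInner X X := by
    rw [frobInner]
    refine Finset.sum_nonneg fun a _ => Finset.sum_nonneg fun b _ => mul_self_nonneg _
  have hInner : frobInner X (c • X) = c * frobInner X X := by
    rw [frobInner, frobInner, Finset.mul_sum]
    refine Finset.sum_congr rfl fun a _ => ?_
    rw [Finset.mul_sum]
    refine Finset.sum_congr rfl fun b _ => ?_
    simp [Matrix.smul_apply, smul_eq_mul]
    ring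
  have hNormSq : frobNorm X ^ 2 = frobInner X X := Real.sq_sqrt hXX
  constructor
  · rw [hG, hInner, hNormSq]
  · rw [hG, frobNorm]
    have : frobInner (c • X) (c • X) = c^2 * frobInner X X := by
      rw [frobInner, frobInner, Finset.mul_sum]
      refine Finset.sum_congr rfl fun a _ => ?_
      rw [Finset.mul_sum]
      refine Finset.sum_congr rfl fun b _ => ?_
      simp [Matrix.smul_apply, smul_eq_mul]
      ring
    rw [this, Real.sqrt_mul (sq_nonneg c), Real.sqrt_sq hc0, frobNorm]

end
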